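/- For every natural number p ≥ 1, the series ∑_{r=p}^∞ arctan( (1/5)·L_{2r} / F_{2r}² ) converges and its sum equals arctan( 1 / L_{2p−1} ). (In particular, taking p = 1 gives ∑_{r=1}^∞ arctan( L_{2r} / (5·F_{2r}²) ) = π/4.) -/

import Mathlib

def lucas : ℕ → ℕ
  | 0 => 2
  | 1 => 1
  | n + 2 => lucas (n + 1) + lucas n

lemma lucas_add_two (n : ℕ) : lucas (n + 2) = lucas (n + 1) + lucas n := rfl

lemma lucas_pos (n : ℕ) : 0 < lucas n := by
  induction n using Nat.twoStepInduction with
  | zero => decide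
  | one => decide
  | more n ih ih2 => rw [lucas_add_two]; omega

lemma le_lucas (n : ℕ) : n ≤ lucas n := by
  induction n using Nat.twoStepInduction with
  | zero => decide
  | one => decide
  | more n ih ih2 =>
    have := lucas_pos n
    rw [lucas_add_two]; omega

lemma lucas_fib (n : ℕ) : (lucas n : ℤ) + Nat.fib n = 2 * Nat.fib (n + 1) := by
  induction n using Nat.twoStepInduction with
  | zero => decide
  | one => decide
  | more n ih ih2 =>
    rw [lucas_add_two, Nat.fib_add_two, Nat.fib_add_two]
    push_cast at *
    linarith

lemma fib_id (n : ℕ) :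
    (Nat.fib (n + 1) : ℤ) ^ 2 - Nat.fib (n + 1) * Nat.fib n - (Nat.fib n : ℤ) ^ 2
      = (-1) ^ n := by
  induction n with
  | zero => decide
  | succ n ih =>
    have e : (Nat.fib (n + 2) : ℤ) = Nat.fib (n + 1) + Nat.fib n := by
      rw [Nat.fib_add_two]; push_cast; ring
    rw [e, pow_succ]
    linear_combination -ih

lemma key (n : ℕ) :
    (lucas n : ℤ) * lucas (n + 2) = 5 * (Nat.fib (n + 1) : ℤ) ^ 2 + (-1) ^ n := by
  have h1 := lucas_fib n
  have h2 := lucas_fib (n + 2)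
  have h3 := fib_id n
  have e2 : (Nat.fib (n + 2) : ℤ) = Nat.fib (n + 1) + Nat.fib n := by
    rw [Nat.fib_add_two]; push_cast; ring
  have e3 : (Nat.fib (n + 3) : ℤ) = Nat.fib (n + 2) + Nat.fib (n + 1) := by
    rw [show n + 3 = (n + 1) + 2 by ring, Nat.fib_add_two]; push_cast; ring
  rw [e3, e2] at h2
  nlinarith [h1, h2, h3]

lemma hterm_aux (m : ℕ) (hm : 2 ≤ m) (heven : Even m) :
    Real.arctan ((1 / 5) * (lucas m : ℝ) / (Nat.fib m : ℝ) ^ 2)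
      = Real.arctan (1 / (lucas (m - 1) : ℝ)) - Real.arctan (1 / (lucas (m + 1) : ℝ)) := by
  have hm0 : m - 1 + 1 = m := by omega
  have hm2 : m - 1 + 2 = m + 1 := by omega
  have hL1 : (0:ℝ) < lucas (m - 1) := by exact_mod_cast lucas_pos _
  have hL2 : (0:ℝ) < lucas (m + 1) := by exact_mod_cast lucas_pos _
  have hfib : (0:ℝ) < Nat.fib m := by
    have : 0 < Nat.fib m := Nat.fib_pos.2 (by omega)
    exact_mod_cast this
  have hkey : (lucas (m - 1) : ℝ) * lucas (m + 1) = 5 * (Nat.fib m : ℝ) ^ 2 - 1 := by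
    have hz := key (m - 1)
    rw [hm0, hm2] at hz
    have hparity : (-1 : ℤ) ^ (m - 1) = -1 := by
      apply Odd.neg_one_pow
      obtain ⟨k, hk⟩ := heven
      exact ⟨k - 1, by omega⟩
    rw [hparity] at hz
    have := congrArg (fun z : ℤ => (z : ℝ)) hz
    push_cast at this
    linarith
  have hdiff : (lucas (m + 1) : ℝ) - lucas (m - 1) = lucas m := by
    have : lucas (m - 1 + 2) = lucas (m - 1 + 1) + lucas (m - 1) := lucas_add_two _
    rw [hm0, hm2] at this
    rw [this]
    push_cast; ring
  have hcond : (1 / (lucas (m - 1) : ℝ)) * (-(1 / (lucas (m + 1) : ℝ))) < 1 := by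
    have h0 : (0:ℝ) < (1 / (lucas (m - 1) : ℝ)) * (1 / (lucas (m + 1) : ℝ)) := by positivity
    nlinarith
  have hadd := Real.arctan_add hcond
  have harg : (1 / (lucas (m - 1) : ℝ) + -(1 / (lucas (m + 1) : ℝ))) /
      (1 - 1 / (lucas (m - 1) : ℝ) * -(1 / (lucas (m + 1) : ℝ)))
      = (1 / 5) * (lucas m : ℝ) / (Nat.fib m : ℝ) ^ 2 := by
    rw [div_eq_div_iff]
    · field_simp
      linear_combination (5 * (Nat.fib m : ℝ)^2) * hdiff
        - (lucas m : ℝ) * hkey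
    · have h5 : (0:ℝ) < 5 * (Nat.fib m : ℝ) ^ 2 := by positivity
      have e : 1 - 1 / ((lucas (m-1):ℝ)) * -(1 / (lucas (m+1):ℝ))
          = 1 + 1 / ((lucas (m-1):ℝ) * (lucas (m+1):ℝ)) := by
        field_simp
        ring
      rw [e]; positivity
    · positivity
  rw [← harg, ← hadd, Real.arctan_neg]
  ring

theorem stmt19 (p : ℕ) (hp : 1 ≤ p) :
    HasSum (fun r : ℕ =>
        Real.arctan ((1 / 5) * (lucas (2 * (p + r)) : ℝ) /
          (Nat.fib (2 * (p + r)) : ℝ) ^ 2))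
      (Real.arctan (1 / (lucas (2 * p - 1) : ℝ))) := by
  set f : ℕ → ℝ := fun r => Real.arctan ((1 / 5) * (lucas (2 * (p + r)) : ℝ) /
      (Nat.fib (2 * (p + r)) : ℝ) ^ 2) with hf
  set g : ℕ → ℝ := fun r => Real.arctan (1 / (lucas (2 * (p + r) - 1) : ℝ)) with hgdef
  have hterm : ∀ r : ℕ, f r = g r - g (r + 1) := by
    intro r
    have h := hterm_aux (2 * (p + r)) (by omega) ⟨p + r, by ring⟩
    have e1 : 2 * (p + (r + 1)) - 1 = 2 * (p + r) + 1 := by omega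
    simp only [hf, hgdef, e1]
    exact h
  have hnonneg : ∀ r, 0 ≤ f r := by
    intro r
    rw [← Real.arctan_zero]
    apply Real.arctan_strictMono.monotone
    have h1 : (0:ℝ) ≤ lucas (2 * (p + r)) := by positivity
    have h2 : (0:ℝ) < Nat.fib (2 * (p + r)) := by
      have : 0 < Nat.fib (2 * (p + r)) := Nat.fib_pos.2 (by omega)
      exact_mod_cast this
    positivity
  rw [hasSum_iff_tendsto_nat_of_nonneg hnonneg]
  have hsum : ∀ n, ∑ i ∈ Finset.range n, f i = g 0 - g n := by
    intro n
    rw [Finset.sum_congr rfl fun i _ => hterm i, Finset.sum_range_sub' g]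
  simp only [hsum]
  have hg0 : g 0 = Real.arctan (1 / (lucas (2 * p - 1) : ℝ)) := by
    simp [hgdef]
  rw [← hg0]
  have hgz : Filter.Tendsto g Filter.atTop (nhds 0) := by
    have hb : ∀ n : ℕ, 1 / (lucas (2 * (p + n) - 1) : ℝ) ≤ 1 / (n + 1 : ℝ) := by
      intro n
      have hle : (n + 1 : ℝ) ≤ lucas (2 * (p + n) - 1) := by
        have h1 : n + 1 ≤ 2 * (p + n) - 1 := by omega
        have h2 := le_lucas (2 * (p + n) - 1)
        exact_mod_cast le_trans (by exact_mod_cast h1) (by exact_mod_cast h2)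
      apply one_div_le_one_div_of_le (by positivity) hle
    have hpos : ∀ n : ℕ, 0 ≤ 1 / (lucas (2 * (p + n) - 1) : ℝ) := by
      intro n
      have : (0:ℝ) < lucas (2 * (p + n) - 1) := by exact_mod_cast lucas_pos _
      positivity
    have htend : Filter.Tendsto (fun n : ℕ => 1 / (lucas (2 * (p + n) - 1) : ℝ))
        Filter.atTop (nhds 0) :=
      squeeze_zero hpos hb tendsto_one_div_add_atTop_nhds_zero_nat
    have := (Real.continuous_arctan.tendsto 0).comp htend
    simpa [hgdef, Real.arctan_zero, Function.comp_def] using this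
  have := Filter.Tendsto.const_sub (g 0) hgz
  simpa using this
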